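/- Suppose a complex vector V = e^{K/2}(X^0, X^1, …, X^n, F_0, …, F_n) over a chart with coordinates z^α satisfies ⟨V, V̄⟩ = i and ⟨V, U_α⟩ = 0 with U_α = D_α V (Kähler covariant derivative), and the Hermitian form g_{αβ̄} = i⟨U_α, Ū_β⟩ is positive definite. Then the (n+1)×(n+1) matrix whose first n rows are D_α X^I and last row is X̄^I is invertible. -/

import Mathlib

open Matrix
open scoped ComplexOrder

/-- The bilinear symplectic pairing `⟨x,y⟩ = xᵀ Ω y` on `ℂ^{2k}`. -/
noncomputable def sympPair {k : ℕ} (x y : Fin k ⊕ Fin k → ℂ) : ℂ :=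
  x ⬝ᵥ ((fromBlocks 0 1 (-1) 0 : Matrix (Fin k ⊕ Fin k) (Fin k ⊕ Fin k) ℂ) *ᵥ y)

lemma sp_eq {k : ℕ} (x y : Fin k ⊕ Fin k → ℂ) :
    sympPair x y = ∑ i, (x (Sum.inl i) * y (Sum.inr i) - x (Sum.inr i) * y (Sum.inl i)) := by
  have h1 : ∀ i, ((fromBlocks 0 1 (-1) 0 : Matrix (Fin k ⊕ Fin k) (Fin k ⊕ Fin k) ℂ) *ᵥ y) (Sum.inl i) = y (Sum.inr i) := by
    intro i
    simp [mulVec, dotProduct, fromBlocks, Fintype.sum_sum_type, Matrix.one_apply]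
  have h2 : ∀ i, ((fromBlocks 0 1 (-1) 0 : Matrix (Fin k ⊕ Fin k) (Fin k ⊕ Fin k) ℂ) *ᵥ y) (Sum.inr i) = - y (Sum.inl i) := by
    intro i
    simp [mulVec, dotProduct, fromBlocks, Fintype.sum_sum_type, Matrix.one_apply]
  simp [sympPair, dotProduct, Fintype.sum_sum_type, h1, h2, Finset.sum_sub_distrib]
  ring

lemma sp_skew {k : ℕ} (x y : Fin k ⊕ Fin k → ℂ) : sympPair x y = - sympPair y x := by
  rw [sp_eq, sp_eq, ← Finset.sum_neg_distrib]
  exact Finset.sum_congr rfl fun i _ => by ring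

lemma sp_conj {k : ℕ} (x y : Fin k ⊕ Fin k → ℂ) :
    star (sympPair x y) = sympPair (star x) (star y) := by
  rw [sp_eq, sp_eq]
  simp [star_sum, Pi.star_apply]

lemma sp_add_left {k : ℕ} (x y z : Fin k ⊕ Fin k → ℂ) :
    sympPair (x + y) z = sympPair x z + sympPair y z := by
  simp [sympPair, add_dotProduct]

lemma sp_smul_left {k : ℕ} (a : ℂ) (x z : Fin k ⊕ Fin k → ℂ) :
    sympPair (a • x) z = a * sympPair x z := by
  simp [sympPair, smul_dotProduct, smul_eq_mul]

lemma sp_add_right {k : ℕ} (x y z : Fin k ⊕ Fin k → ℂ) :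
    sympPair x (y + z) = sympPair x y + sympPair x z := by
  simp [sympPair, mulVec_add, dotProduct_add]

lemma sp_smul_right {k : ℕ} (a : ℂ) (x z : Fin k ⊕ Fin k → ℂ) :
    sympPair x (a • z) = a * sympPair x z := by
  simp [sympPair, mulVec_smul, dotProduct_smul, smul_eq_mul]

lemma sp_sum_left {k : ℕ} {ι : Type*} (s : Finset ι) (f : ι → (Fin k ⊕ Fin k → ℂ))
    (z : Fin k ⊕ Fin k → ℂ) :
    sympPair (∑ i ∈ s, f i) z = ∑ i ∈ s, sympPair (f i) z := by
  induction s using Finset.cons_induction with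
  | empty => simp [sympPair]
  | cons a s ha ih => rw [Finset.sum_cons, Finset.sum_cons, sp_add_left, ih]

lemma sp_sum_right {k : ℕ} {ι : Type*} (s : Finset ι) (f : ι → (Fin k ⊕ Fin k → ℂ))
    (z : Fin k ⊕ Fin k → ℂ) :
    sympPair z (∑ i ∈ s, f i) = ∑ i ∈ s, sympPair z (f i) := by
  induction s using Finset.cons_induction with
  | empty => simp [sympPair]
  | cons a s ha ih => rw [Finset.sum_cons, Finset.sum_cons, sp_add_right, ih]

/-- If `⟨V,V̄⟩ = i`, `⟨V,U_α⟩ = 0`, `⟨U_α,V̄⟩ = 0` and `g_{αβ̄} = i⟨U_α,Ū_β⟩` is positive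
definite, then the matrix whose rows are the upper halves of the `U_α` and of `V̄`
is invertible. -/
theorem stmt12 {n : ℕ} (V : Fin (n+1) ⊕ Fin (n+1) → ℂ)
    (U : Fin n → (Fin (n+1) ⊕ Fin (n+1) → ℂ))
    (hVV : sympPair V (star V) = Complex.I)
    (hVU : ∀ α, sympPair V (U α) = 0)
    (hUV : ∀ α, sympPair (U α) (star V) = 0)
    (hg : (Matrix.of fun α β : Fin n =>
      Complex.I * sympPair (U α) (star (U β))).PosDef) :
    IsUnit (Matrix.of fun (r I : Fin (n+1)) =>
      Fin.lastCases (motive := fun _ => ℂ) ((star V) (Sum.inl I)) (fun α => U α (Sum.inl I)) r).det := by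
  rw [isUnit_iff_ne_zero]
  intro hdet
  have hdetT : ((Matrix.of fun (r I : Fin (n+1)) =>
      Fin.lastCases (motive := fun _ => ℂ) ((star V) (Sum.inl I)) (fun α => U α (Sum.inl I)) r)ᵀ).det = 0 := by
    rw [Matrix.det_transpose]; exact hdet
  obtain ⟨c, hc0, hc⟩ := Matrix.exists_mulVec_eq_zero_iff.mpr hdetT
  set g : Matrix (Fin n) (Fin n) ℂ :=
    Matrix.of fun α β : Fin n => Complex.I * sympPair (U α) (star (U β)) with hgdef
  set c' : Fin n → ℂ := fun α => c α.castSucc with hc'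
  set cn : ℂ := c (Fin.last n) with hcn
  -- row relation
  have hrow : ∀ I, (∑ α, c' α * U α (Sum.inl I)) + cn * (star V) (Sum.inl I) = 0 := by
    intro I
    have h := congrFun hc I
    simp only [Matrix.mulVec, dotProduct, Matrix.transpose_apply, Matrix.of_apply,
      Pi.zero_apply] at h
    rw [Fin.sum_univ_castSucc] at h
    simp only [Fin.lastCases_castSucc, Fin.lastCases_last] at h
    rw [← h]
    apply congrArg₂ _ (Finset.sum_congr rfl fun α _ => by ring) (by ring)
  set W : Fin (n+1) ⊕ Fin (n+1) → ℂ := (∑ α, c' α • U α) + cn • star V with hW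
  have hWup : ∀ I, W (Sum.inl I) = 0 := by
    intro I
    simpa [hW, Finset.sum_apply, Pi.smul_apply, smul_eq_mul] using hrow I
  have hzero : sympPair (star W) W = 0 := by
    rw [sp_eq]
    apply Finset.sum_eq_zero
    intro i _
    have h1 : (star W) (Sum.inl i) = 0 := by simp [Pi.star_apply, hWup i]
    rw [hWup i, h1]; ring
  have hsW : star W = (∑ α, (star (c' α)) • star (U α)) + (star cn) • V := by
    rw [hW]
    simp [star_sum, star_smul, star_star]
  -- pairing facts
  have fact1 : ∀ α β, sympPair (star (U α)) (U β) = Complex.I * g β α := by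
    intro α β
    have h1 : sympPair (star (U α)) (U β) = - sympPair (U β) (star (U α)) := sp_skew _ _
    have h2 : g β α = Complex.I * sympPair (U β) (star (U α)) := rfl
    have h3 : Complex.I * Complex.I = -1 := Complex.I_mul_I
    linear_combination h1 - Complex.I * h2 - sympPair (U β) (star (U α)) * h3
  have fact2 : ∀ α, sympPair (star (U α)) (star V) = 0 := by
    intro α
    rw [← sp_conj (U α) V, sp_skew (U α) V, hVU α]
    simp
  have hA : ∀ α, sympPair (star (U α)) W = ∑ β, c' β * (Complex.I * g β α) := by
    intro α
    rw [hW, sp_add_right, sp_sum_right, sp_smul_right, fact2, mul_zero, add_zero]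
    exact Finset.sum_congr rfl fun β _ => by rw [sp_smul_right, fact1]
  have hB : sympPair V W = cn * Complex.I := by
    rw [hW, sp_add_right, sp_sum_right, sp_smul_right, hVV]
    simp [sp_smul_right, hVU]
  have hmain : sympPair (star W) W
      = Complex.I * ((∑ β, c' β * ∑ α, g β α * star (c' α)) + star cn * cn) := by
    rw [hsW, sp_add_left, sp_sum_left, sp_smul_left, hB]
    have h4 : ∀ α, sympPair (star (c' α) • star (U α)) W
        = star (c' α) * ∑ β, c' β * (Complex.I * g β α) := by
      intro α; rw [sp_smul_left, hA]
    calc (∑ α, sympPair (star (c' α) • star (U α)) W) + star cn * (cn * Complex.I)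
        = (∑ α, ∑ β, star (c' α) * (c' β * (Complex.I * g β α))) + star cn * (cn * Complex.I) := by
          rw [Finset.sum_congr rfl fun α _ => by rw [h4 α, Finset.mul_sum]]
      _ = (∑ β, ∑ α, star (c' α) * (c' β * (Complex.I * g β α))) + star cn * (cn * Complex.I) := by
          rw [Finset.sum_comm]
      _ = (∑ β, Complex.I * (c' β * ∑ α, g β α * star (c' α))) + star cn * (cn * Complex.I) := by
          refine congrArg₂ _ (Finset.sum_congr rfl fun β _ => ?_) rfl
          rw [Finset.mul_sum, Finset.mul_sum]
          exact Finset.sum_congr rfl fun α _ => by ring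
      _ = Complex.I * ((∑ β, c' β * ∑ α, g β α * star (c' α)) + star cn * cn) := by
          rw [mul_add, Finset.mul_sum]
          exact congrArg₂ _ (Finset.sum_congr rfl fun β _ => by ring) (by ring)
  set d : Fin n → ℂ := fun α => star (c' α) with hd
  have hdot : (star d) ⬝ᵥ (g *ᵥ d) = ∑ β, c' β * ∑ α, g β α * star (c' α) := by
    simp [dotProduct, Matrix.mulVec, hd, Finset.mul_sum]
  have hsum0 : (star d) ⬝ᵥ (g *ᵥ d) + star cn * cn = 0 := by
    have h5 : Complex.I * ((star d) ⬝ᵥ (g *ᵥ d) + star cn * cn) = 0 := by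
      rw [hdot, ← hmain, hzero]
    exact (mul_eq_zero.mp h5).resolve_left Complex.I_ne_zero
  have h1 : 0 ≤ (star d) ⬝ᵥ (g *ᵥ d) := hg.posSemidef.dotProduct_mulVec_nonneg d
  have h2 : 0 ≤ star cn * cn := star_mul_self_nonneg cn
  obtain ⟨hq0, hcn0⟩ := (add_eq_zero_iff_of_nonneg h1 h2).mp hsum0
  have hcnz : cn = 0 := by
    rcases mul_eq_zero.mp hcn0 with h | h
    · exact star_eq_zero.mp h
    · exact h
  have hdz : d = 0 := by
    by_contra hne
    exact lt_irrefl 0 (hq0 ▸ hg.dotProduct_mulVec_pos hne)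
  have hcz : c = 0 := by
    funext r
    induction r using Fin.lastCases with
    | last => exact hcnz
    | cast α =>
      have : d α = 0 := congrFun hdz α
      have : star (c' α) = 0 := this
      have h6 : c' α = 0 := star_eq_zero.mp this
      exact h6
  exact hc0 hcz
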